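/- For a finite-dimensional Kac algebra H, the Fourier transforms satisfy F_{H*} ∘ F_H = S, where S is the antipode of H. -/

import Mathlib

/- STATEMENT 4: For a finite-dimensional Kac algebra H, the Fourier transforms satisfy
F_{H*} ∘ F_H = S, where S is the antipode of H.  Here h ∈ H and φ ∈ H* are the unique non-zero
idempotent integrals, normalized so that φ(h) = 1/dim H, δ = √(dim H),
F_H(a) = δ φ₁(a) φ₂ and F_{H*}(f) = δ f(h₁) h₂. -/

open scoped TensorProduct

noncomputable section

variable {H : Type*} [Ring H] [HopfAlgebra ℂ H]

/-- Convolution product on the dual of `H`, as a linear map on the tensor square. -/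
def dmulT : Module.Dual ℂ H ⊗[ℂ] Module.Dual ℂ H →ₗ[ℂ] Module.Dual ℂ H :=
  (Coalgebra.comul (R := ℂ) (A := H)).dualMap ∘ₗ TensorProduct.dualDistrib ℂ H H

/-- Comultiplication on the dual of `H` (dual to the multiplication of `H`). -/
def dComul [FiniteDimensional ℂ H] :
    Module.Dual ℂ H →ₗ[ℂ] Module.Dual ℂ H ⊗[ℂ] Module.Dual ℂ H :=
  (TensorProduct.dualDistribEquiv ℂ H H).symm.toLinearMap ∘ₗ (LinearMap.mul' ℂ H).dualMap

/-- The Fourier transform `F_H : H → H*`, `a ↦ δ φ₁(a) φ₂`, where `δ = √(dim H)` and `φ` is the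
idempotent integral of `H*`. -/
def FH [FiniteDimensional ℂ H] (φ : Module.Dual ℂ H) : H →ₗ[ℂ] Module.Dual ℂ H :=
  (Real.sqrt (Module.finrank ℂ H) : ℂ) •
    ((TensorProduct.lid ℂ (Module.Dual ℂ H)).toLinearMap
      ∘ₗ TensorProduct.map (contractRight ℂ H) LinearMap.id
      ∘ₗ (TensorProduct.assoc ℂ H (Module.Dual ℂ H) (Module.Dual ℂ H)).symm.toLinearMap
      ∘ₗ (TensorProduct.mk ℂ H (Module.Dual ℂ H ⊗[ℂ] Module.Dual ℂ H)).flip (dComul φ))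

/-- The Fourier transform `F_{H*} : H* → H`, `f ↦ δ f(h₁) h₂`, where `δ = √(dim H)` and `h` is
the idempotent integral of `H`. -/
def FK (h : H) : Module.Dual ℂ H →ₗ[ℂ] H :=
  (Real.sqrt (Module.finrank ℂ H) : ℂ) •
    ((TensorProduct.lid ℂ H).toLinearMap
      ∘ₗ TensorProduct.map (contractLeft ℂ H) LinearMap.id
      ∘ₗ (TensorProduct.assoc ℂ (Module.Dual ℂ H) H H).symm.toLinearMap
      ∘ₗ (TensorProduct.mk ℂ (Module.Dual ℂ H) (H ⊗[ℂ] H)).flip (Coalgebra.comul (R := ℂ) h))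

/-! ### Auxiliary lemmas -/

lemma aux_counit_right (x : H) {ι : Type*} (r : Coalgebra.Repr ℂ x ι) :
    ∑ i ∈ r.index, Coalgebra.counit (R := ℂ) (r.right i) • r.left i = x := by
  have h := congrArg (TensorProduct.rid ℂ H) (Coalgebra.sum_tmul_counit_eq (R := ℂ) r)
  simp only [map_sum, TensorProduct.rid_tmul, one_smul] at h
  exact h

lemma aux_counit_left (x : H) {ι : Type*} (r : Coalgebra.Repr ℂ x ι) :
    ∑ i ∈ r.index, Coalgebra.counit (R := ℂ) (r.left i) • r.right i = x := by
  have h := congrArg (TensorProduct.lid ℂ H) (Coalgebra.sum_counit_tmul_eq (R := ℂ) r)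
  simp only [map_sum, TensorProduct.lid_tmul, one_smul] at h
  exact h

lemma aux_dual_sep [FiniteDimensional ℂ H] {v w : H}
    (hvw : ∀ f : Module.Dual ℂ H, f v = f w) : v = w := by
  rw [← sub_eq_zero, ← Module.forall_dual_apply_eq_zero_iff ℂ (v - w)]
  intro f; simp [hvw f]

lemma aux_phi_inv [FiniteDimensional ℂ H] (φ : Module.Dual ℂ H)
    (hφ2 : ∀ f : Module.Dual ℂ H, dmulT (φ ⊗ₜ f) = f 1 • φ)
    (x : H) {ι : Type*} (r : Coalgebra.Repr ℂ x ι) :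
    ∑ i ∈ r.index, φ (r.left i) • r.right i = φ x • (1 : H) := by
  apply aux_dual_sep
  intro f
  have h := LinearMap.congr_fun (hφ2 f) x
  simp only [dmulT, LinearMap.comp_apply, LinearMap.dualMap_apply] at h
  rw [← r.eq, map_sum] at h
  simp only [TensorProduct.dualDistrib_apply, LinearMap.smul_apply, smul_eq_mul] at h
  simp only [map_sum, map_smul, smul_eq_mul]
  rw [h]; ring

lemma aux_star (h : H)
    (hint1 : ∀ x : H, x * h = Coalgebra.counit (R := ℂ) x • h) (y : H) :
    Coalgebra.comul (R := ℂ) y * Coalgebra.comul (R := ℂ) h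
      = Coalgebra.counit (R := ℂ) y • Coalgebra.comul (R := ℂ) h := by
  rw [← Bialgebra.comul_mul, hint1, map_smul]

lemma aux_antipode_sum (y : H) {ι : Type*} (r : Coalgebra.Repr ℂ y ι) :
    ∑ j ∈ r.index, HopfAlgebra.antipode (R := ℂ) (r.left j) * r.right j
      = Coalgebra.counit (R := ℂ) y • (1 : H) := by
  rw [HopfAlgebra.sum_antipode_mul_eq_algebraMap_counit r, Algebra.algebraMap_eq_smul_one]

lemma aux_key (h : H)
    (hint1 : ∀ x : H, x * h = Coalgebra.counit (R := ℂ) x • h) (x : H) :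
    ((1 : H) ⊗ₜ[ℂ] x) * Coalgebra.comul (R := ℂ) h
      = (HopfAlgebra.antipode (R := ℂ) x ⊗ₜ[ℂ] (1 : H)) * Coalgebra.comul (R := ℂ) h := by
  set S : H →ₗ[ℂ] H := HopfAlgebra.antipode (R := ℂ) (A := H) with hS
  set C : H ⊗[ℂ] H := Coalgebra.comul (R := ℂ) h with hC
  set rx := Coalgebra.Repr.arbitrary ℂ x with hrx
  set r1 : (i : rx.ι) → Coalgebra.Repr ℂ (rx.left i) (H × H) :=
    fun i => Coalgebra.Repr.arbitrary ℂ _ with hr1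
  set r2 : (i : rx.ι) → Coalgebra.Repr ℂ (rx.right i) (H × H) :=
    fun i => Coalgebra.Repr.arbitrary ℂ _ with hr2
  have e1 : ∑ i ∈ rx.index,
        (S (rx.left i) ⊗ₜ[ℂ] (1:H)) * (Coalgebra.comul (R := ℂ) (rx.right i) * C)
      = (S x ⊗ₜ[ℂ] (1:H)) * C := by
    calc ∑ i ∈ rx.index,
          (S (rx.left i) ⊗ₜ[ℂ] (1:H)) * (Coalgebra.comul (R := ℂ) (rx.right i) * C)
        = ∑ i ∈ rx.index, Coalgebra.counit (R := ℂ) (rx.right i) •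
            ((S (rx.left i) ⊗ₜ[ℂ] (1:H)) * C) := by
          refine Finset.sum_congr rfl fun i _ => ?_
          rw [hC, aux_star h hint1, mul_smul_comm]
      _ = ((S (∑ i ∈ rx.index, Coalgebra.counit (R := ℂ) (rx.right i) • rx.left i))
            ⊗ₜ[ℂ] (1:H)) * C := by
          rw [map_sum, TensorProduct.sum_tmul, Finset.sum_mul]
          refine Finset.sum_congr rfl fun i _ => ?_
          rw [map_smul, ← TensorProduct.smul_tmul', smul_mul_assoc]
      _ = (S x ⊗ₜ[ℂ] (1:H)) * C := by rw [aux_counit_right x rx]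
  have claimG : ∑ i ∈ rx.index, ∑ j ∈ (r2 i).index,
        (S (rx.left i) * (r2 i).left j) ⊗ₜ[ℂ] (r2 i).right j = (1:H) ⊗ₜ[ℂ] x := by
    have co := Coalgebra.sum_tmul_tmul_eq (R := ℂ) rx r1 r2
    have co' := congrArg
      (TensorProduct.map (LinearMap.mul' ℂ H ∘ₗ TensorProduct.map S LinearMap.id) LinearMap.id
        ∘ₗ (TensorProduct.assoc ℂ H H H).symm.toLinearMap) co
    simp only [map_sum, LinearMap.comp_apply, LinearEquiv.coe_coe,
      TensorProduct.assoc_symm_tmul, TensorProduct.map_tmul, LinearMap.mul'_apply,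
      LinearMap.id_coe, id_eq] at co'
    rw [← co']
    calc ∑ i ∈ rx.index, ∑ j ∈ (r1 i).index,
          (S ((r1 i).left j) * (r1 i).right j) ⊗ₜ[ℂ] rx.right i
        = ∑ i ∈ rx.index,
            (∑ j ∈ (r1 i).index, S ((r1 i).left j) * (r1 i).right j) ⊗ₜ[ℂ] rx.right i := by
          simp only [TensorProduct.sum_tmul]
      _ = ∑ i ∈ rx.index,
            (1:H) ⊗ₜ[ℂ] (Coalgebra.counit (R := ℂ) (rx.left i) • rx.right i) := by
          refine Finset.sum_congr rfl fun i _ => ?_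
          rw [aux_antipode_sum (rx.left i) (r1 i), TensorProduct.smul_tmul]
      _ = (1:H) ⊗ₜ[ℂ] x := by
          rw [← TensorProduct.tmul_sum, aux_counit_left x rx]
  have e2 : ∑ i ∈ rx.index,
        (S (rx.left i) ⊗ₜ[ℂ] (1:H)) * (Coalgebra.comul (R := ℂ) (rx.right i) * C)
      = ((1:H) ⊗ₜ[ℂ] x) * C := by
    calc ∑ i ∈ rx.index,
          (S (rx.left i) ⊗ₜ[ℂ] (1:H)) * (Coalgebra.comul (R := ℂ) (rx.right i) * C)
        = ∑ i ∈ rx.index, ∑ j ∈ (r2 i).index,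
            (((S (rx.left i) * (r2 i).left j) ⊗ₜ[ℂ] (r2 i).right j) * C) := by
          refine Finset.sum_congr rfl fun i _ => ?_
          rw [← (r2 i).eq, ← mul_assoc, Finset.mul_sum, Finset.sum_mul]
          refine Finset.sum_congr rfl fun j _ => ?_
          rw [Algebra.TensorProduct.tmul_mul_tmul, one_mul]
      _ = (∑ i ∈ rx.index, ∑ j ∈ (r2 i).index,
            (S (rx.left i) * (r2 i).left j) ⊗ₜ[ℂ] (r2 i).right j) * C := by
          simp only [Finset.sum_mul]
      _ = ((1:H) ⊗ₜ[ℂ] x) * C := by rw [claimG]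
  rw [← e2, e1]

/-- `Emap φ (u ⊗ v) = φ u • v`. -/
def Emap (φ : Module.Dual ℂ H) : H ⊗[ℂ] H →ₗ[ℂ] H :=
  (TensorProduct.lid ℂ H).toLinearMap ∘ₗ TensorProduct.map φ LinearMap.id

@[simp] lemma Emap_tmul (φ : Module.Dual ℂ H) (u v : H) :
    Emap φ (u ⊗ₜ[ℂ] v) = φ u • v := by
  simp [Emap]

lemma Emap_one_tmul_mul (φ : Module.Dual ℂ H) (y : H) (c : H ⊗[ℂ] H) :
    Emap φ (((1 : H) ⊗ₜ[ℂ] y) * c) = y * Emap φ c := by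
  induction c using TensorProduct.induction_on with
  | zero => simp
  | tmul u v => simp [Algebra.TensorProduct.tmul_mul_tmul, mul_smul_comm]
  | add a b ha hb => rw [mul_add, map_add, ha, hb, map_add, mul_add]

lemma aux_main [FiniteDimensional ℂ H] (h : H) (φ : Module.Dual ℂ H)
    (hint1 : ∀ x : H, x * h = Coalgebra.counit (R := ℂ) x • h)
    (hφ2 : ∀ f : Module.Dual ℂ H, dmulT (φ ⊗ₜ f) = f 1 • φ)
    (hSS : ∀ x : H, HopfAlgebra.antipode (R := ℂ) (HopfAlgebra.antipode (R := ℂ) x) = x)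
    (a : H) {ι : Type*} (rh : Coalgebra.Repr ℂ h ι) :
    ∑ i ∈ rh.index, φ (a * rh.left i) • rh.right i
      = φ h • HopfAlgebra.antipode (R := ℂ) a := by
  have step1 : ∑ i ∈ rh.index, φ (a * rh.left i) • rh.right i
      = Emap φ ((a ⊗ₜ[ℂ] (1:H)) * Coalgebra.comul (R := ℂ) h) := by
    rw [← rh.eq, Finset.mul_sum, map_sum]
    refine Finset.sum_congr rfl fun i _ => ?_
    rw [Algebra.TensorProduct.tmul_mul_tmul, one_mul, Emap_tmul]
  have step2 : (a ⊗ₜ[ℂ] (1:H)) * Coalgebra.comul (R := ℂ) h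
      = ((1:H) ⊗ₜ[ℂ] HopfAlgebra.antipode (R := ℂ) a) * Coalgebra.comul (R := ℂ) h := by
    rw [aux_key h hint1 (HopfAlgebra.antipode (R := ℂ) a), hSS a]
  have EC : Emap φ (Coalgebra.comul (R := ℂ) h) = φ h • (1:H) := by
    rw [← rh.eq, map_sum]
    simp only [Emap_tmul]
    exact aux_phi_inv φ hφ2 h rh
  rw [step1, step2, Emap_one_tmul_mul, EC, mul_smul_comm, mul_one]

set_option maxHeartbeats 1000000 in
set_option synthInstance.maxHeartbeats 400000 in
theorem fourier_fourier_eq_antipode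
    [StarRing H] [StarModule ℂ H] [FiniteDimensional ℂ H]
    (h : H) (φ : Module.Dual ℂ H)
    -- h is the non-zero idempotent two-sided integral of H:
    (hne : h ≠ 0)
    (hint1 : ∀ x : H, x * h = Coalgebra.counit (R := ℂ) x • h)
    (hint2 : ∀ x : H, h * x = Coalgebra.counit (R := ℂ) x • h)
    (hch : Coalgebra.counit (R := ℂ) h = 1)
    -- φ is the non-zero idempotent two-sided integral of H*:
    (hφne : φ ≠ 0)
    (hφ1 : ∀ f : Module.Dual ℂ H, dmulT (f ⊗ₜ φ) = f 1 • φ)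
    (hφ2 : ∀ f : Module.Dual ℂ H, dmulT (φ ⊗ₜ f) = f 1 • φ)
    (hφone : φ 1 = 1)
    -- normalization: φ(h) = 1/dim H:
    (hnorm : φ h = (Module.finrank ℂ H : ℂ)⁻¹)
    -- Kac algebra axioms:
    (hSS : ∀ x : H, HopfAlgebra.antipode (R := ℂ) (HopfAlgebra.antipode (R := ℂ) x) = x)
    (hSstar : ∀ x : H,
      HopfAlgebra.antipode (R := ℂ) (star (HopfAlgebra.antipode (R := ℂ) (star x))) = x) :
    FK h ∘ₗ FH φ = HopfAlgebra.antipode (R := ℂ) (A := H) := by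
  ext a
  set δ : ℂ := (Real.sqrt (Module.finrank ℂ H) : ℂ) with hδ
  set rh := Coalgebra.Repr.arbitrary ℂ h with hrh
  -- FH applied
  have FH_apply : ∀ x : H, (FH φ a) x = δ * φ (a * x) := by
    intro x
    have key : ∀ t : Module.Dual ℂ H ⊗[ℂ] Module.Dual ℂ H,
        ((TensorProduct.lid ℂ (Module.Dual ℂ H))
          (TensorProduct.map (contractRight ℂ H) LinearMap.id
            ((TensorProduct.assoc ℂ H (Module.Dual ℂ H) (Module.Dual ℂ H)).symm
              (a ⊗ₜ[ℂ] t)))) x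
          = TensorProduct.dualDistrib ℂ H H t (a ⊗ₜ[ℂ] x) := by
      intro t
      induction t using TensorProduct.induction_on with
      | zero => simp
      | tmul f g => simp [contractRight_apply]
      | add s t hs ht =>
          rw [TensorProduct.tmul_add, map_add, map_add, map_add, LinearMap.add_apply,
            map_add, LinearMap.add_apply, hs, ht]
    have hdd : TensorProduct.dualDistrib ℂ H H (dComul φ) = (LinearMap.mul' ℂ H).dualMap φ := by
      have h1 : (TensorProduct.dualDistribEquiv ℂ H H) (dComul φ)
          = (LinearMap.mul' ℂ H).dualMap φ := by
        rw [dComul]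
        simp only [LinearMap.comp_apply, LinearEquiv.coe_coe]
        exact (TensorProduct.dualDistribEquiv ℂ H H).apply_symm_apply _
      rw [← h1]; rfl
    simp only [FH, LinearMap.smul_apply, LinearMap.coe_comp, Function.comp_apply,
      LinearEquiv.coe_coe, LinearMap.flip_apply, TensorProduct.mk_apply, smul_eq_mul]
    rw [key (dComul φ), hdd]
    simp [LinearMap.dualMap_apply]
    exact Or.inl rfl
  -- FK applied
  have FK_apply : ∀ f : Module.Dual ℂ H,
      FK h f = δ • ∑ i ∈ rh.index, f (rh.left i) • rh.right i := by
    intro f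
    simp only [FK, LinearMap.smul_apply, LinearMap.coe_comp, Function.comp_apply,
      LinearEquiv.coe_coe, LinearMap.flip_apply, TensorProduct.mk_apply]
    congr 1
    rw [← rh.eq, TensorProduct.tmul_sum, map_sum, map_sum, map_sum]
    refine Finset.sum_congr rfl fun i _ => ?_
    simp [contractLeft_apply]
  -- assemble
  have hm := aux_main h φ hint1 hφ2 hSS a rh
  simp only [LinearMap.comp_apply]
  rw [FK_apply (FH φ a)]
  have : ∑ i ∈ rh.index, (FH φ a) (rh.left i) • rh.right i
      = δ • ∑ i ∈ rh.index, φ (a * rh.left i) • rh.right i := by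
    rw [Finset.smul_sum]
    refine Finset.sum_congr rfl fun i _ => ?_
    rw [FH_apply, mul_smul]
  rw [this, hm, hnorm]
  have hpos : (0 : ℕ) < Module.finrank ℂ H := by
    haveI : Nontrivial H := nontrivial_of_ne h 0 hne
    exact Module.finrank_pos
  have hδδ : δ * δ = (Module.finrank ℂ H : ℂ) := by
    rw [hδ, ← Complex.ofReal_mul, Real.mul_self_sqrt (Nat.cast_nonneg _)]
    norm_num
  rw [smul_smul, smul_smul, hδδ, mul_inv_cancel₀ (by exact_mod_cast hpos.ne'), one_smul]

end
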